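/- Let ψ be a solution on the class of monotone games satisfying AE (average efficiency), I (invariance) and RcParM (relative c-participation monotonicity). Let u be a monotone game with C₁ = {i ∈ N : c(u, i) = 1} nonempty, let ε > 0, and let u^ε be the perturbed game defined by u^ε(S) = u(S) + ε if S ∩ C₁ ≠ ∅ and u^ε(S) = u(S) otherwise. Then for every agent i ∈ C₁, ψ_i(u^ε) − ψ_i(u) = (1/|C₁|) · ∑_{S ⊆ N} w · (u^ε(S) − u(S)), where w = 1/(2ⁿ − 1). -/

import Mathlib

open Finset
open scoped Classical

def IsMonotoneGame (n : ℕ) (u : Finset (Fin n) → ℝ) : Prop :=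
  u ∅ = 0 ∧ ∀ S T : Finset (Fin n), S ⊆ T → u S ≤ u T

noncomputable def contrib {n : ℕ} (u : Finset (Fin n) → ℝ) (i : Fin n) : ℝ :=
  if ∀ S : Finset (Fin n), u (insert i S) = u S then 0 else 1

noncomputable def C1 {n : ℕ} (u : Finset (Fin n) → ℝ) : Finset (Fin n) :=
  Finset.univ.filter fun i => contrib u i = 1

noncomputable def perturb {n : ℕ} (u : Finset (Fin n) → ℝ) (ε : ℝ) :
    Finset (Fin n) → ℝ :=
  fun S => if (S ∩ C1 u).Nonempty then u S + ε else u S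

/-- The average participation solution, with weight `w = 1 / (2 ^ n - 1)`. -/
noncomputable def AP {n : ℕ} (u : Finset (Fin n) → ℝ) (i : Fin n) : ℝ :=
  ∑ S ∈ (Finset.univ.erase i).powerset,
    (1 / (2 ^ n - 1 : ℝ)) * (contrib u i / ((∑ j ∈ S, contrib u j) + 1)) * u (insert i S)

lemma perturb_mono {n : ℕ} {u : Finset (Fin n) → ℝ} {ε : ℝ} (hu : IsMonotoneGame n u)
    (hε : 0 < ε) : IsMonotoneGame n (perturb u ε) := by
  constructor
  · simp [perturb, hu.1]
  · intro S T hST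
    unfold perturb
    by_cases hS : (S ∩ C1 u).Nonempty
    · have hT : (T ∩ C1 u).Nonempty := hS.mono (inter_subset_inter hST le_rfl)
      simp [hS, hT]
      exact hu.2 S T hST
    · by_cases hT : (T ∩ C1 u).Nonempty
      · simp [hS, hT]
        linarith [hu.2 S T hST]
      · simp [hS, hT]
        exact hu.2 S T hST

lemma mem_C1_iff {n : ℕ} {u : Finset (Fin n) → ℝ} {i : Fin n} :
    i ∈ C1 u ↔ ¬ ∀ S : Finset (Fin n), u (insert i S) = u S := by
  simp only [C1, mem_filter, mem_univ, true_and, contrib]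
  by_cases h : ∀ S : Finset (Fin n), u (insert i S) = u S <;> simp_all

lemma contrib_perturb {n : ℕ} {u : Finset (Fin n) → ℝ} {ε : ℝ}
    (hu : IsMonotoneGame n u) (hε : 0 < ε) (j : Fin n) :
    contrib (perturb u ε) j = contrib u j := by
  unfold contrib
  by_cases hj : ∀ S : Finset (Fin n), u (insert j S) = u S
  · have hj' : j ∉ C1 u := by rw [mem_C1_iff]; push_neg; exact hj
    have : ∀ S : Finset (Fin n), perturb u ε (insert j S) = perturb u ε S := by
      intro S
      have : insert j S ∩ C1 u = S ∩ C1 u := by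
        ext x; simp only [mem_inter, mem_insert]
        constructor
        · rintro ⟨h1 | h1, h2⟩
          · exact absurd (h1 ▸ h2) hj'
          · exact ⟨h1, h2⟩
        · rintro ⟨h1, h2⟩; exact ⟨Or.inr h1, h2⟩
      simp [perturb, this, hj S]
    simp [this, hj]
  · have hj' : j ∈ C1 u := mem_C1_iff.mpr hj
    push_neg at hj
    obtain ⟨S, hS⟩ := hj
    have hjS : j ∉ S := by
      intro h; exact hS (by rw [insert_eq_self.mpr h])
    have h1 : (insert j S ∩ C1 u).Nonempty := ⟨j, by simp [hj']⟩
    have key : ¬ ∀ T : Finset (Fin n), perturb u ε (insert j T) = perturb u ε T := by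
      push_neg
      refine ⟨S, ?_⟩
      by_cases hS2 : (S ∩ C1 u).Nonempty
      · simp only [perturb, if_pos h1, if_pos hS2]
        intro h; exact hS (by linarith)
      · simp only [perturb, if_pos h1, if_neg hS2]
        have := hu.2 S (insert j S) (subset_insert j S)
        intro h; linarith
    simp only [if_neg key]
    split
    · exact absurd ‹_› (by push_neg; exact ⟨S, hS⟩)
    · rfl
theorem psi_perturb_increase (n : ℕ) (hn : 1 ≤ n)
    (ψ : (Finset (Fin n) → ℝ) → Fin n → ℝ)
    (hAE : ∀ u, IsMonotoneGame n u →
      ∑ i, ψ u i =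
        (1 / (2 ^ n - 1 : ℝ)) * ∑ S ∈ (Finset.univ : Finset (Fin n)).powerset, u S)
    (hI : ∀ u, IsMonotoneGame n u → ∀ i : Fin n, contrib u i = 0 → ψ u i = 0)
    (hRcParM : ∀ u v, IsMonotoneGame n u → IsMonotoneGame n v →
      (∀ j : Fin n, contrib u j = contrib v j) → ∀ i k : Fin n,
      contrib u i = contrib u k →
      (∀ S : Finset (Fin n), i ∉ S → k ∉ S →
        u (insert i S) - v (insert i S) ≥ u (insert k S) - v (insert k S)) →
      ψ u i - ψ v i ≥ ψ u k - ψ v k)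
    (u : Finset (Fin n) → ℝ) (hu : IsMonotoneGame n u)
    (hC : (C1 u).Nonempty) (ε : ℝ) (hε : 0 < ε) :
    ∀ i ∈ C1 u,
      ψ (perturb u ε) i - ψ u i =
        (1 / ((C1 u).card : ℝ)) *
          ∑ S ∈ (Finset.univ : Finset (Fin n)).powerset,
            (1 / (2 ^ n - 1 : ℝ)) * (perturb u ε S - u S) := by
  intro i hi
  set v := perturb u ε with hv
  have hvmono : IsMonotoneGame n v := perturb_mono hu hε
  have hcon : ∀ j : Fin n, contrib v j = contrib u j := contrib_perturb hu hε
  have hdiff : ∀ a ∈ C1 u, ∀ S : Finset (Fin n),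
      v (insert a S) - u (insert a S) = ε := by
    intro a ha S
    have hne : (insert a S ∩ C1 u).Nonempty := ⟨a, by simp [ha]⟩
    simp [hv, perturb, hne]
  have hd : ∀ k ∈ C1 u, ψ v k - ψ u k = ψ v i - ψ u i := by
    intro k hk
    have hci : contrib u i = 1 := (mem_filter.mp hi).2
    have hck : contrib u k = 1 := (mem_filter.mp hk).2
    have h1 := hRcParM v u hvmono hu hcon k i
      (by rw [hcon k, hcon i, hck, hci])
      (fun S _ _ => by rw [hdiff k hk S, hdiff i hi S])
    have h2 := hRcParM v u hvmono hu hcon i k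
      (by rw [hcon k, hcon i, hck, hci])
      (fun S _ _ => by rw [hdiff k hk S, hdiff i hi S])
    linarith
  have hzero : ∀ j : Fin n, j ∉ C1 u → ψ v j - ψ u j = 0 := by
    intro j hj
    have hcj : contrib u j = 0 := by
      have : contrib u j ≠ 1 := by
        intro h; exact hj (mem_filter.mpr ⟨mem_univ j, h⟩)
      unfold contrib at this ⊢
      split <;> simp_all
    rw [hI v hvmono j ((hcon j).trans hcj), hI u hu j hcj, sub_zero]
  have hsum : ∑ j, (ψ v j - ψ u j) =
      ∑ S ∈ (Finset.univ : Finset (Fin n)).powerset,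
        (1 / (2 ^ n - 1 : ℝ)) * (v S - u S) := by
    rw [Finset.sum_sub_distrib, hAE v hvmono, hAE u hu]
    rw [← mul_sub, ← Finset.sum_sub_distrib, Finset.mul_sum]
  have hsplit : ∑ j, (ψ v j - ψ u j) = ∑ j ∈ C1 u, (ψ v j - ψ u j) := by
    rw [← Finset.sum_subset (Finset.subset_univ (C1 u))]
    intro x _ hx
    exact hzero x hx
  have hconst : ∑ j ∈ C1 u, (ψ v j - ψ u j) =
      ((C1 u).card : ℝ) * (ψ v i - ψ u i) := by
    rw [Finset.sum_congr rfl (fun k hk => hd k hk), Finset.sum_const, nsmul_eq_mul]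
  have hcard : ((C1 u).card : ℝ) ≠ 0 := by
    exact_mod_cast Finset.card_ne_zero_of_mem hi
  have : ((C1 u).card : ℝ) * (ψ v i - ψ u i) =
      ∑ S ∈ (Finset.univ : Finset (Fin n)).powerset,
        (1 / (2 ^ n - 1 : ℝ)) * (v S - u S) := by
    rw [← hconst, ← hsplit, hsum]
  rw [← this, one_div, inv_mul_cancel_left₀ hcard]
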